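/- For the standard normal baseline F₀ = Φ and finite truncation points T₁ < T₂, the truncated location-family CDF F(y;θ) = {Φ(y−θ) − Φ(T₁−θ)}/{Φ(T₂−θ) − Φ(T₁−θ)} satisfies lim_{θ→∞} F(y;θ) = 0 and lim_{θ→−∞} F(y;θ) = 1 for every y ∈ (T₁,T₂). -/

import Mathlib

open Filter

/-- The standard normal CDF. -/
noncomputable def stdNormalCDF (x : ℝ) : ℝ :=
  ∫ t in Set.Iic x, Real.exp (-(t ^ 2) / 2) / Real.sqrt (2 * Real.pi)

open Real MeasureTheory Set

noncomputable def φ (t : ℝ) : ℝ := Real.exp (-(t ^ 2) / 2) / Real.sqrt (2 * Real.pi)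

lemma sqrt2pi_pos : 0 < Real.sqrt (2 * Real.pi) := Real.sqrt_pos.2 (by positivity)

lemma φ_pos (t : ℝ) : 0 < φ t := div_pos (exp_pos _) sqrt2pi_pos

lemma integrable_φ : Integrable φ := by
  have h := (integrable_exp_neg_mul_sq (b := (1:ℝ)/2) (by norm_num)).div_const (Real.sqrt (2 * Real.pi))
  have : φ = fun t => Real.exp (-(1/2 : ℝ) * t ^ 2) / Real.sqrt (2 * Real.pi) := by
    funext t; unfold φ; norm_num; ring_nf
  rw [this]; exact h

lemma integral_φ : ∫ t, φ t = 1 := by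
  unfold φ
  rw [integral_div]
  simp_rw [show ∀ t : ℝ, -(t ^ 2) / 2 = -(1/2 : ℝ) * t ^ 2 from fun t => by ring]
  rw [integral_gaussian, show (π / (1/2 : ℝ)) = 2 * π by ring,
    div_self (ne_of_gt sqrt2pi_pos)]

lemma expInt {b : ℝ} (hb : 0 < b) (a : ℝ) :
    ∫ u in Ioi a, Real.exp (-b * u) = Real.exp (-b * a) / b := by
  have hderiv : ∀ x ∈ Ici a, HasDerivAt (fun u => -Real.exp (-b * u) / b) (Real.exp (-b * x)) x := by
    intro x _
    have h1 : HasDerivAt (fun u : ℝ => -b * u) (-b) x := by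
      simpa using (hasDerivAt_id x).const_mul (-b)
    have h2 := (h1.exp).neg.div_const b
    refine h2.congr_deriv ?_
    rw [div_eq_iff hb.ne']; ring
  have hlin : Tendsto (fun u : ℝ => -b * u) atTop atBot :=
    tendsto_id.const_mul_atTop_of_neg (by linarith)
  have hlim : Tendsto (fun u : ℝ => -Real.exp (-b * u) / b) atTop (nhds 0) := by
    simpa using ((tendsto_exp_atBot.comp hlin).neg.div_const b)
  rw [integral_Ioi_of_hasDerivAt_of_tendsto' hderiv (exp_neg_integrableOn_Ioi a hb) hlim]
  ring

lemma Φ_eq (x : ℝ) : stdNormalCDF x = ∫ t in Set.Iic x, φ t := rfl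

lemma Φ_eq_Ioi (x : ℝ) : stdNormalCDF x = ∫ u in Ioi (-x), φ u := by
  rw [Φ_eq, show Iic x = Iic (-(-x)) by rw [neg_neg], ← integral_comp_neg_Ioi]
  congr 1; funext u; unfold φ; norm_num

lemma Φ_mono : Monotone stdNormalCDF := by
  intro x y hxy
  rw [Φ_eq, Φ_eq]
  exact setIntegral_mono_set integrable_φ.integrableOn
    (Filter.Eventually.of_forall fun t => (φ_pos t).le)
    (HasSubset.Subset.eventuallyLE (Iic_subset_Iic.2 hxy))

lemma Φ_strictMono : StrictMono stdNormalCDF := by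
  intro x y hxy
  have h : stdNormalCDF y - stdNormalCDF x = ∫ t in x..y, φ t := by
    rw [Φ_eq, Φ_eq]
    exact intervalIntegral.integral_Iic_sub_Iic integrable_φ.integrableOn integrable_φ.integrableOn
  have hpos : 0 < ∫ t in x..y, φ t :=
    intervalIntegral.intervalIntegral_pos_of_pos (integrable_φ.intervalIntegrable)
      (fun t => φ_pos t) hxy
  linarith

lemma Φ_pos (x : ℝ) : 0 < stdNormalCDF x := by
  have h1 : 0 < ∫ t in (x-1)..x, φ t :=
    intervalIntegral.intervalIntegral_pos_of_pos (integrable_φ.intervalIntegrable)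
      (fun t => φ_pos t) (by linarith)
  have h2 : stdNormalCDF x - stdNormalCDF (x-1) = ∫ t in (x-1)..x, φ t := by
    rw [Φ_eq, Φ_eq]
    exact intervalIntegral.integral_Iic_sub_Iic integrable_φ.integrableOn integrable_φ.integrableOn
  have h3 : (0:ℝ) ≤ stdNormalCDF (x-1) := by
    rw [Φ_eq]
    exact setIntegral_nonneg measurableSet_Iic fun t _ => (φ_pos t).le
  linarith

lemma Φ_lb {s ε : ℝ} (hs : s ≤ 0) (hε : 0 < ε) :
    ε * φ (s - ε) ≤ stdNormalCDF s := by
  have h1 : ∫ t in Set.Ioc (s-ε) s, φ t ≤ stdNormalCDF s := by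
    rw [Φ_eq]
    exact setIntegral_mono_set integrable_φ.integrableOn
      (Filter.Eventually.of_forall fun t => (φ_pos t).le)
      (HasSubset.Subset.eventuallyLE Ioc_subset_Iic_self)
  have h2 : ∫ t in Set.Ioc (s-ε) s, φ (s-ε) ≤ ∫ t in Set.Ioc (s-ε) s, φ t := by
    apply setIntegral_mono_on
    · exact integrableOn_const measure_Ioc_lt_top.ne
    · exact integrable_φ.integrableOn
    · exact measurableSet_Ioc
    · intro t ht
      unfold φ
      apply div_le_div_of_nonneg_right ?_ sqrt2pi_pos.le
      apply Real.exp_le_exp.2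
      nlinarith [ht.1, ht.2, hε, hs]
  have h3 : ∫ t in Set.Ioc (s-ε) s, φ (s-ε) = ε * φ (s-ε) := by
    rw [setIntegral_const, Measure.real, Real.volume_Ioc, smul_eq_mul]
    rw [ENNReal.toReal_ofReal (by linarith)]
    ring_nf
  linarith

lemma Φ_ub {x : ℝ} (hx : x < 0) :
    stdNormalCDF x ≤ Real.exp (-(x^2)/2) / ((-x) * Real.sqrt (2*Real.pi)) := by
  set a := -x with ha_def
  have ha : 0 < a := by simp [ha_def]; linarith
  rw [Φ_eq_Ioi]
  have h2 : ∫ u in Ioi a, φ u ≤ ∫ u in Ioi a, Real.exp (a^2/2) * Real.exp (-a*u) / Real.sqrt (2*Real.pi) := by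
    apply setIntegral_mono_on
    · exact integrable_φ.integrableOn
    · exact (((exp_neg_integrableOn_Ioi a ha).const_mul _).div_const _)
    · exact measurableSet_Ioi
    · intro u hu
      unfold φ
      rw [← Real.exp_add]
      apply div_le_div_of_nonneg_right ?_ sqrt2pi_pos.le
      apply Real.exp_le_exp.2
      nlinarith [mem_Ioi.1 hu]
  have h3 : ∫ u in Ioi a, Real.exp (a^2/2) * Real.exp (-a*u) / Real.sqrt (2*Real.pi)
      = Real.exp (-x^2/2) / (a * Real.sqrt (2*Real.pi)) := by
    simp_rw [show ∀ u : ℝ, Real.exp (a^2/2) * Real.exp (-a*u) / Real.sqrt (2*Real.pi)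
      = Real.exp (-a*u) * (Real.exp (a^2/2) / Real.sqrt (2*Real.pi)) from fun u => by ring]
    rw [integral_mul_const, expInt ha a, div_mul_div_comm, ← Real.exp_add,
      show -a*a + a^2/2 = -x^2/2 by rw [ha_def]; ring]
  exact h2.trans_eq h3

lemma ratio_tendsto {c : ℝ} (hc : c < 0) :
    Tendsto (fun s => stdNormalCDF (s + c) / stdNormalCDF s) atBot (nhds 0) := by
  set ε : ℝ := -c/2 with hε_def
  have hε : 0 < ε := by rw [hε_def]; linarith
  set B : ℝ → ℝ := fun s =>
    (Real.exp (-(s+c)^2/2) / ((-(s+c)) * Real.sqrt (2*Real.pi))) / (ε * φ (s - ε)) with hB_def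
  have hBlim : Tendsto B atBot (nhds 0) := by
    have hEq : ∀ᶠ s in atBot, B s =
        Real.exp (ε * s + ε*(c-ε)/2) * ((-(s+c)) * ε)⁻¹ := by
      filter_upwards [eventually_lt_atBot (-c)] with s hs
      have h1 : (0:ℝ) < -(s+c) := by linarith
      rw [hB_def]
      simp only
      unfold φ
      have h2 : -(s+c)^2/2 = (ε * s + ε*(c-ε)/2) + (-(s-ε)^2/2) := by
        rw [hε_def]; ring
      rw [h2, Real.exp_add]
      have hX : (-(s+c)) ≠ 0 := h1.ne'
      have hE : Real.exp (-(s-ε)^2/2) ≠ 0 := Real.exp_ne_zero _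
      have hden : (-(s+c) * Real.sqrt (2*Real.pi)) * (ε * (Real.exp (-(s-ε)^2/2) / Real.sqrt (2*Real.pi)))
          = (-(s+c) * ε) * Real.exp (-(s-ε)^2/2) := by
        field_simp
      rw [div_div, hden, mul_div_mul_right _ _ hE, div_eq_mul_inv]
    have hlin : Tendsto (fun s : ℝ => ε * s + ε*(c-ε)/2) atBot atBot := by
      apply tendsto_atBot_add_const_right
      exact (tendsto_const_mul_atBot_of_pos hε).2 tendsto_id
    have h1 : Tendsto (fun s : ℝ => Real.exp (ε * s + ε*(c-ε)/2)) atBot (nhds 0) :=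
      Real.tendsto_exp_atBot.comp hlin
    have h2 : Tendsto (fun s : ℝ => ((-(s+c)) * ε)⁻¹) atBot (nhds 0) := by
      apply Tendsto.inv_tendsto_atTop
      apply Tendsto.atTop_mul_const hε
      have : Tendsto (fun s : ℝ => -(s+c)) atBot atTop := by
        simp only [neg_add]
        apply tendsto_atTop_add_const_right
        exact tendsto_neg_atBot_atTop
      exact this
    have h3 := h1.mul h2
    rw [mul_zero] at h3
    exact Tendsto.congr' (EventuallyEq.symm hEq) h3
  apply tendsto_of_tendsto_of_tendsto_of_le_of_le' tendsto_const_nhds hBlim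
  · exact Filter.Eventually.of_forall fun s =>
      div_nonneg (Φ_pos _).le (Φ_pos _).le
  · filter_upwards [eventually_le_atBot (0:ℝ)] with s hs
    rw [hB_def]
    simp only
    have hsc : s + c < 0 := by linarith
    have hX : (0:ℝ) < -(s+c) := by linarith
    apply div_le_div₀ (div_nonneg (Real.exp_pos _).le (mul_nonneg hX.le sqrt2pi_pos.le))
      (Φ_ub hsc) (mul_pos hε (φ_pos _)) (Φ_lb hs hε)

lemma div_aux (x y w : ℝ) (hw : w ≠ 0) : (x/w)/(y/w) = x/y := by
  rcases eq_or_ne y 0 with rfl | hy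
  · simp
  · field_simp

lemma core {a b : ℝ} (ha : a < 0) (hb : b < 0) :
    Tendsto (fun s => (stdNormalCDF (s + a) - stdNormalCDF (s + b)) /
      (stdNormalCDF s - stdNormalCDF (s + b))) atBot (nhds 0) := by
  have hA := ratio_tendsto ha
  have hB := ratio_tendsto hb
  have key : Tendsto (fun s => (stdNormalCDF (s+a)/stdNormalCDF s - stdNormalCDF (s+b)/stdNormalCDF s)
      / (1 - stdNormalCDF (s+b)/stdNormalCDF s)) atBot (nhds 0) := by
    have h := (hA.sub hB).div ((tendsto_const_nhds (x := (1:ℝ))).sub hB) (by norm_num)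
    rw [show ((0:ℝ) - 0) / (1 - 0) = 0 by norm_num] at h
    exact h
  apply Tendsto.congr ?_ key
  intro s
  have hw : stdNormalCDF s ≠ 0 := (Φ_pos s).ne'
  rw [div_sub_div_same, ← div_self hw]
  rw [div_sub_div_same, div_aux _ _ _ hw]

lemma Φ_neg_eq (x : ℝ) : stdNormalCDF (-x) = 1 - stdNormalCDF x := by
  have h1 : stdNormalCDF (-x) = ∫ u in Ioi x, φ u := by
    rw [Φ_eq_Ioi, neg_neg]
  have h2 : stdNormalCDF x + ∫ u in Ioi x, φ u = 1 := by
    rw [Φ_eq, intervalIntegral.integral_Iic_add_Ioi integrable_φ.integrableOn integrable_φ.integrableOn,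
      integral_φ]
  linarith

/-- For the standard normal baseline and finite truncation points T₁ < T₂, the
truncated location-family CDF satisfies lim_{θ→∞} F(y;θ) = 0 and
lim_{θ→−∞} F(y;θ) = 1 for every y ∈ (T₁,T₂). -/
theorem truncated_normal_limits (T₁ T₂ : ℝ) (h12 : T₁ < T₂)
    (y : ℝ) (hy : y ∈ Set.Ioo T₁ T₂) :
    Tendsto (fun θ => (stdNormalCDF (y - θ) - stdNormalCDF (T₁ - θ)) /
        (stdNormalCDF (T₂ - θ) - stdNormalCDF (T₁ - θ))) atTop (nhds 0) ∧
    Tendsto (fun θ => (stdNormalCDF (y - θ) - stdNormalCDF (T₁ - θ)) /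
        (stdNormalCDF (T₂ - θ) - stdNormalCDF (T₁ - θ))) atBot (nhds 1) := by
  obtain ⟨hy1, hy2⟩ := hy
  constructor
  · -- θ → ∞
    have hcomp : Tendsto (fun θ : ℝ => T₂ - θ) atTop atBot := by
      apply tendsto_atBot_add_const_left
      exact tendsto_neg_atTop_atBot
    have h := (core (a := y - T₂) (b := T₁ - T₂) (by linarith) (by linarith)).comp hcomp
    apply Tendsto.congr ?_ h
    intro θ
    simp only [Function.comp]
    rw [show T₂ - θ + (y - T₂) = y - θ by ring, show T₂ - θ + (T₁ - T₂) = T₁ - θ by ring]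
  · -- θ → -∞
    have hcomp : Tendsto (fun θ : ℝ => θ - T₁) atBot atBot := by
      apply tendsto_atBot_add_const_right
      exact tendsto_id
    have h := (core (a := T₁ - y) (b := T₁ - T₂) (by linarith) (by linarith)).comp hcomp
    have h' : Tendsto (fun θ : ℝ => 1 - (stdNormalCDF (θ - y) - stdNormalCDF (θ - T₂)) /
        (stdNormalCDF (θ - T₁) - stdNormalCDF (θ - T₂))) atBot (nhds 1) := by
      have := (tendsto_const_nhds (x := (1:ℝ))).sub
        (Tendsto.congr (fun θ => by
          simp only [Function.comp]
          rw [show θ - T₁ + (T₁ - y) = θ - y by ring, show θ - T₁ + (T₁ - T₂) = θ - T₂ by ring]) h)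
      simpa using this
    apply Tendsto.congr ?_ h'
    intro θ
    have hne : stdNormalCDF (θ - T₁) - stdNormalCDF (θ - T₂) ≠ 0 := by
      have := Φ_strictMono (show θ - T₂ < θ - T₁ by linarith)
      linarith
    rw [show y - θ = -(θ - y) by ring, show T₁ - θ = -(θ - T₁) by ring,
      show T₂ - θ = -(θ - T₂) by ring, Φ_neg_eq, Φ_neg_eq, Φ_neg_eq]
    rw [show 1 - stdNormalCDF (θ - y) - (1 - stdNormalCDF (θ - T₁))
        = stdNormalCDF (θ - T₁) - stdNormalCDF (θ - y) by ring,
      show 1 - stdNormalCDF (θ - T₂) - (1 - stdNormalCDF (θ - T₁))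
        = stdNormalCDF (θ - T₁) - stdNormalCDF (θ - T₂) by ring]
    field_simp
    ring
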